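/- Let A : ℝ → ℝ be continuously differentiable, let F_L, F_R, s ∈ ℝ with F_L < F_R, and suppose the Rankine–Hugoniot condition (A(F_L) − A(F_R))/(F_L − F_R) = s holds together with the Oleinik condition: (A(θ) − A(F_L))/(θ − F_L) ≥ s for every θ ∈ (F_L, F_R). Let η : ℝ → ℝ be convex and continuously differentiable with Lipschitz derivative, and define ψ(y) := ∫_{F_L}^{y} η'(z)·A'(z) dz. Then ψ(F_L) − ψ(F_R) − s·(η(F_L) − η(F_R)) ≥ 0. -/

import Mathlib

open intervalIntegral

open MeasureTheory Set in
/-- Key integration-by-parts-type inequality: if `f` is monotone and continuous,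
`h` is continuous with nonnegative primitive on `(a,b]`, then
`∫ (f b - f z) * h z ≥ 0` over `Ioc a b`. -/
lemma stieltjes_ibp_nonneg (f h : ℝ → ℝ) (hf : Monotone f) (hfc : Continuous f)
    (hh : Continuous h) (a b : ℝ) (hab : a ≤ b)
    (hg : ∀ t ∈ Set.Ioc a b, 0 ≤ ∫ z in a..t, h z) :
    0 ≤ ∫ z in Set.Ioc a b, (f b - f z) * h z := by
  -- Stieltjes measure associated to `f`
  set F : StieltjesFunction ℝ := ⟨f, hf, fun x => (hfc.continuousAt).continuousWithinAt⟩ with hF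
  set μ := F.measure with hμ
  set ν := μ.restrict (Set.Ioc a b) with hν
  set lam := (volume : Measure ℝ).restrict (Set.Ioc a b) with hlam
  haveI : IsFiniteMeasure ν := by
    constructor
    rw [hν, Measure.restrict_apply_univ, hμ, F.measure_Ioc]
    exact ENNReal.ofReal_lt_top
  haveI : IsFiniteMeasure lam := by
    constructor
    rw [hlam, Measure.restrict_apply_univ]
    exact (measure_Ioc_lt_top)
  -- the two-variable function
  set G : ℝ → ℝ → ℝ := fun z t => if z < t then h z else 0 with hG
  obtain ⟨C, hC⟩ := (isCompact_Icc (a := a) (b := b)).exists_bound_of_continuousOn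
    hh.continuousOn
  have hC0 : 0 ≤ C := le_trans (norm_nonneg _) (hC a ⟨le_rfl, hab⟩)
  have hGmeas : Measurable (Function.uncurry G) := by
    apply Measurable.ite
    · exact measurableSet_lt measurable_fst measurable_snd
    · exact hh.measurable.comp measurable_fst
    · exact measurable_const
  have hint : Integrable (Function.uncurry G) (lam.prod ν) := by
    refine Integrable.mono' (integrable_const C) hGmeas.aestronglyMeasurable ?_
    have hprod : lam.prod ν = ((volume : Measure ℝ).prod μ).restrict
        (Set.Ioc a b ×ˢ Set.Ioc a b) := by
      rw [hlam, hν, Measure.prod_restrict]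
    rw [hprod]
    filter_upwards [ae_restrict_mem (measurableSet_Ioc.prod measurableSet_Ioc)] with p hp
    rcases hp with ⟨hp1, _⟩
    have h1 : ‖Function.uncurry G p‖ ≤ ‖h p.1‖ := by
      simp only [Function.uncurry, hG]
      split <;> simp [norm_nonneg]
    exact h1.trans (hC p.1 ⟨hp1.1.le, hp1.2⟩)
  have swap := MeasureTheory.integral_integral_swap hint
  -- evaluate the left side
  have hL : (∫ z, (∫ t, G z t ∂ν) ∂lam) = ∫ z in Set.Ioc a b, (f b - f z) * h z := by
    rw [hlam]
    refine integral_congr_ae ?_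
    filter_upwards [ae_restrict_mem measurableSet_Ioc] with z hz
    have h1 : ∀ t, G z t = (Set.Ioi z).indicator (fun _ => h z) t := by
      intro t; simp [hG, Set.indicator_apply, Set.mem_Ioi]
    simp only [h1]
    rw [integral_indicator_const _ measurableSet_Ioi, hν,
      measureReal_def, Measure.restrict_apply measurableSet_Ioi]
    have h2 : Set.Ioi z ∩ Set.Ioc a b = Set.Ioc z b := by
      ext x
      simp only [Set.mem_inter_iff, Set.mem_Ioi, Set.mem_Ioc]
      constructor
      · rintro ⟨h3, _, h5⟩; exact ⟨h3, h5⟩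
      · rintro ⟨h3, h4⟩; exact ⟨h3, hz.1.trans h3, h4⟩
    rw [h2, hμ, F.measure_Ioc]
    have h3 : F z ≤ F b := hf hz.2
    rw [ENNReal.toReal_ofReal (sub_nonneg.2 h3)]
    simp [smul_eq_mul]
    exact Or.inl rfl
  -- the right side is nonnegative
  have hR : 0 ≤ ∫ t, (∫ z, G z t ∂lam) ∂ν := by
    refine integral_nonneg_of_ae ?_
    rw [hν]
    filter_upwards [ae_restrict_mem measurableSet_Ioc] with t ht
    have h1 : ∀ z, G z t = (Set.Iio t).indicator h z := by
      intro z; simp [hG, Set.indicator_apply, Set.mem_Iio]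
    simp only [h1]
    rw [hlam, MeasureTheory.integral_indicator measurableSet_Iio,
      Measure.restrict_restrict measurableSet_Iio]
    have h2 : Set.Iio t ∩ Set.Ioc a b = Set.Ioo a t := by
      ext x
      simp only [Set.mem_inter_iff, Set.mem_Iio, Set.mem_Ioc, Set.mem_Ioo]
      constructor
      · rintro ⟨h3, h4, _⟩; exact ⟨h4, h3⟩
      · rintro ⟨h3, h4⟩; exact ⟨h4, h3, h4.le.trans ht.2⟩
    rw [h2, ← MeasureTheory.integral_Ioc_eq_integral_Ioo,
      ← intervalIntegral.integral_of_le ht.1.le]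
    exact hg t ht
  rw [← hL]; rw [swap]; exact hR

/-- Across a shock `(F_L, F_R)` with speed `s` satisfying the
Rankine–Hugoniot and Oleinik conditions, every convex `C^{1,1}` entropy `η` with
associated entropy flux `ψ` (`ψ' = η' A'`) satisfies
`ψ(F_L) − ψ(F_R) − s(η(F_L) − η(F_R)) ≥ 0`. -/
theorem entropy_dissipation_across_shock
    (A : ℝ → ℝ) (hA : ContDiff ℝ 1 A)
    (FL FR s : ℝ) (hLR : FL < FR)
    (hRH : (A FL - A FR) / (FL - FR) = s)
    (hOleinik : ∀ θ ∈ Set.Ioo FL FR, s ≤ (A θ - A FL) / (θ - FL))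
    (η : ℝ → ℝ) (hηconv : ConvexOn ℝ Set.univ η) (hη : ContDiff ℝ 1 η)
    (K : NNReal) (hηLip : LipschitzWith K (deriv η))
    (ψ : ℝ → ℝ) (hψ : ∀ y, ψ y = ∫ z in FL..y, deriv η z * deriv A z) :
    0 ≤ ψ FL - ψ FR - s * (η FL - η FR) := by
  have hA' : Continuous (deriv A) := hA.continuous_deriv le_rfl
  have hAd : Differentiable ℝ A := hA.differentiable one_ne_zero
  set h : ℝ → ℝ := fun z => deriv A z - s with hh_def
  have hh : Continuous h := hA'.sub continuous_const
  have hgval : ∀ t, (∫ z in FL..t, h z) = A t - A FL - s * (t - FL) := by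
    intro t
    have h1 : (∫ z in FL..t, deriv A z) = A t - A FL :=
      intervalIntegral.integral_deriv_eq_sub (fun x _ => hAd x)
        (hA'.intervalIntegrable _ _)
    rw [hh_def]
    rw [intervalIntegral.integral_sub (hA'.intervalIntegrable _ _)
      (intervalIntegrable_const), h1, intervalIntegral.integral_const]
    rw [smul_eq_mul]; ring
  have hFR0 : A FR - A FL - s * (FR - FL) = 0 := by
    have hne : FL - FR ≠ 0 := by linarith
    rw [div_eq_iff hne] at hRH
    linarith
  have hg : ∀ t ∈ Set.Ioc FL FR, 0 ≤ ∫ z in FL..t, h z := by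
    intro t ht
    rw [hgval]
    rcases eq_or_lt_of_le ht.2 with h1 | h1
    · rw [h1]; linarith
    · have h2 := hOleinik t ⟨ht.1, h1⟩
      have h3 : 0 < t - FL := by linarith [ht.1]
      rw [le_div_iff₀ h3] at h2
      linarith
  have hfc : Continuous (deriv η) := hη.continuous_deriv le_rfl
  have hfmono : Monotone (deriv η) := by
    have := hηconv.monotoneOn_deriv (fun x _ => hη.differentiable one_ne_zero x)
    exact monotoneOn_univ.mp this
  have hψFL : ψ FL = 0 := by rw [hψ]; exact intervalIntegral.integral_same
  have hηsub : (∫ z in FL..FR, deriv η z) = η FR - η FL :=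
    intervalIntegral.integral_deriv_eq_sub
      (fun x _ => hη.differentiable one_ne_zero x)
      (hfc.intervalIntegrable _ _)
  have hinth : (∫ z in FL..FR, h z) = 0 := by rw [hgval]; linarith
  have key : 0 ≤ ∫ z in Set.Ioc FL FR, (deriv η FR - deriv η z) * h z :=
    stieltjes_ibp_nonneg _ _ hfmono hfc hh FL FR hLR.le hg
  have key2 : 0 ≤ ∫ z in FL..FR, (deriv η FR - deriv η z) * h z := by
    rw [intervalIntegral.integral_of_le hLR.le]; exact key
  have hexp : (∫ z in FL..FR, (deriv η FR - deriv η z) * h z)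
      = deriv η FR * (∫ z in FL..FR, h z) - ∫ z in FL..FR, deriv η z * h z := by
    have e : Set.EqOn (fun z => (deriv η FR - deriv η z) * h z)
        (fun z => deriv η FR * h z - deriv η z * h z) (Set.uIcc FL FR) := by
      intro z _; ring
    rw [intervalIntegral.integral_congr e,
      intervalIntegral.integral_sub ((show Continuous (fun z => deriv η FR * h z) from continuous_const.mul hh).intervalIntegrable _ _)
        ((show Continuous (fun z => deriv η z * h z) from hfc.mul hh).intervalIntegrable _ _),
      intervalIntegral.integral_const_mul]
  have hfh : (∫ z in FL..FR, deriv η z * h z)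
      = (∫ z in FL..FR, deriv η z * deriv A z) - s * (η FR - η FL) := by
    have e : Set.EqOn (fun z => deriv η z * h z)
        (fun z => deriv η z * deriv A z - s * deriv η z) (Set.uIcc FL FR) := by
      intro z _; simp only [hh_def]; ring
    rw [intervalIntegral.integral_congr e,
      intervalIntegral.integral_sub ((show Continuous (fun z => deriv η z * deriv A z) from hfc.mul hA').intervalIntegrable _ _)
        ((show Continuous (fun z => s * deriv η z) from continuous_const.mul hfc).intervalIntegrable _ _),
      intervalIntegral.integral_const_mul, hηsub]
  rw [hψFL, hψ FR]
  rw [hexp, hinth, mul_zero, zero_sub, hfh] at key2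
  linarith
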